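/- Let k ≥ 2, 1 ≤ m ≤ k-1, p a pmf on {1,...,k}. Then for every fixed y: p(y) = ((k-1)/m) · Σ_{L ∈ Q_m : y ∉ L} q0(L) − (k-m-1)/m, where q0(L) := (1/C(k-1, m)) Σ_{j ∉ L} p(j) is the conditional law of L given s=0 under the symmetric random-query mechanism. -/

import Mathlib

open Finset

theorem pmf_recovery_from_negative_response_law (k m : ℕ) (hk : 2 ≤ k) (hm1 : 1 ≤ m)
    (hm2 : m ≤ k - 1) (p : Fin k → ℝ) (hp : ∀ y, 0 ≤ p y) (hsum : ∑ y, p y = 1)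
    (y : Fin k) :
    p y = (((k : ℝ) - 1) / (m : ℝ)) *
        ∑ L ∈ ((Finset.univ : Finset (Fin k)).powersetCard m).filter (fun L => y ∉ L),
          (1 / (Nat.choose (k - 1) m : ℝ)) * ∑ j ∈ Lᶜ, p j
      - ((k : ℝ) - (m : ℝ) - 1) / (m : ℝ) := by
  set A := ((Finset.univ : Finset (Fin k)).powersetCard m).filter (fun L => y ∉ L) with hA
  have hAeq : A = ({y}ᶜ : Finset (Fin k)).powersetCard m := by
    ext L
    simp only [hA, Finset.mem_filter, Finset.mem_powersetCard, Finset.subset_univ, true_and,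
      Finset.subset_compl_singleton]
    tauto
  -- swap the double sum
  have hswap : ∑ L ∈ A, ∑ j ∈ Lᶜ, p j
      = ∑ j, p j * ((A.filter (fun L => j ∉ L)).card : ℝ) := by
    have h1 : ∀ L ∈ A, ∑ j ∈ Lᶜ, p j = ∑ j, if j ∉ L then p j else 0 := by
      intro L _
      rw [Finset.sum_ite, Finset.sum_const_zero, add_zero]
      apply Finset.sum_congr
      · ext j; simp
      · intros; rfl
    rw [Finset.sum_congr rfl h1, Finset.sum_comm]
    refine Finset.sum_congr rfl fun j _ => ?_
    rw [← Finset.sum_filter, Finset.sum_const, nsmul_eq_mul, mul_comm]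
  have hcy : ((A.filter (fun L => y ∉ L)).card : ℕ) = (k - 1).choose m := by
    have h2 : A.filter (fun L => y ∉ L) = A := by
      apply Finset.filter_true_of_mem
      intro L hL
      simp only [hA, Finset.mem_filter] at hL
      exact hL.2
    rw [h2, hAeq, Finset.card_powersetCard, Finset.card_compl, Finset.card_singleton,
      Fintype.card_fin]
  have hcj : ∀ j, j ≠ y → ((A.filter (fun L => j ∉ L)).card : ℕ) = (k - 2).choose m := by
    intro j hj
    have h3 : A.filter (fun L => j ∉ L) = (({y}ᶜ : Finset (Fin k)).erase j).powersetCard m := by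
      ext L
      simp only [Finset.mem_filter, hAeq, Finset.mem_powersetCard, Finset.subset_erase]
      tauto
    rw [h3, Finset.card_powersetCard, Finset.card_erase_of_mem, Finset.card_compl,
      Finset.card_singleton, Fintype.card_fin]
    · rfl
    · simp [hj]
  -- compute the big sum
  have hbig : ∑ L ∈ A, ∑ j ∈ Lᶜ, p j
      = p y * ((k - 1).choose m : ℝ) + (1 - p y) * ((k - 2).choose m : ℝ) := by
    rw [hswap, ← Finset.add_sum_erase _ _ (Finset.mem_univ y), hcy]
    congr 1
    have h4 : ∑ j ∈ Finset.univ.erase y, p j * ((A.filter (fun L => j ∉ L)).card : ℝ)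
        = ∑ j ∈ Finset.univ.erase y, p j * ((k - 2).choose m : ℝ) := by
      refine Finset.sum_congr rfl fun j hj => ?_
      rw [hcj j (Finset.mem_erase.mp hj).1]
    rw [h4, ← Finset.sum_mul]
    have h5 : ∑ j ∈ Finset.univ.erase y, p j = 1 - p y := by
      have := Finset.add_sum_erase _ p (Finset.mem_univ y)
      rw [hsum] at this
      linarith
    rw [h5]
  -- factor out the constant
  have hfac : ∑ L ∈ A, (1 / ((k - 1).choose m : ℝ)) * ∑ j ∈ Lᶜ, p j
      = (1 / ((k - 1).choose m : ℝ)) * ∑ L ∈ A, ∑ j ∈ Lᶜ, p j := by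
    rw [Finset.mul_sum]
  rw [hfac, hbig]
  -- arithmetic
  have hm0 : (0 : ℝ) < (m : ℝ) := by exact_mod_cast hm1
  have hc1 : (0 : ℝ) < ((k - 1).choose m : ℝ) := by
    exact_mod_cast Nat.choose_pos hm2
  -- (k-1) * C(k-2, m-1) = m * C(k-1, m)
  have hkey : ((k : ℝ) - 1) * ((k - 2).choose (m - 1) : ℝ) = (m : ℝ) * ((k - 1).choose m : ℝ) := by
    have h6 : (k - 1) * (k - 2).choose (m - 1) = (k - 1).choose m * m := by
      have := Nat.add_one_mul_choose_eq (k - 2) (m - 1)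
      have hk2 : k - 2 + 1 = k - 1 := by omega
      have hm2' : m - 1 + 1 = m := by omega
      rw [hk2, hm2'] at this
      exact this
    have hk1 : ((k : ℝ) - 1) = ((k - 1 : ℕ) : ℝ) := by
      have : (1 : ℕ) ≤ k := by omega
      push_cast [this]; ring
    rw [hk1]
    exact_mod_cast h6.trans (mul_comm _ _)
  -- Pascal: C(k-1, m) = C(k-2, m) + C(k-2, m-1)
  have hpascal : ((k - 1).choose m : ℝ) = ((k - 2).choose m : ℝ) + ((k - 2).choose (m - 1) : ℝ) := by
    have h7 : (k - 1).choose m = (k - 2).choose m + (k - 2).choose (m - 1) := by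
      have hk2 : k - 1 = (k - 2) + 1 := by omega
      have hm2' : m = (m - 1) + 1 := by omega
      rw [hk2, hm2', Nat.choose_succ_succ', ← hm2']
      omega
    exact_mod_cast h7
  field_simp
  linear_combination (1 - p y) * hkey + (((k : ℝ) - 1) * (1 - p y)) * hpascal
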